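/- arXiv:1405.2310 — 2 statements merged into one kernel-verified Lean document; each statement's English description precedes it below -/
import Mathlib

section
/- The Toda potential V₀(r) = e^{-r} + r - 1 is super-quadratic on the negative half-line: the function r ↦ V₀(r)/r² is strictly increasing in |r| for r < 0, i.e., for r₁ < r₂ < 0 one has V₀(r₂)/r₂² < V₀(r₁)/r₁². -/
noncomputable def V₀ : ℝ → ℝ := fun r => Real.exp (-r) + r - 1

private lemma hasDerivAt_expneg (r : ℝ) :
    HasDerivAt (fun x : ℝ => Real.exp (-x)) (-Real.exp (-r)) r := by
  exact ((Real.hasDerivAt_exp (-r)).comp r (hasDerivAt_neg r)).congr_deriv (by ring)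

private lemma hasDerivAt_h' (r : ℝ) :
    HasDerivAt (fun x : ℝ => (x + 1) * Real.exp (-x) - 1) (-r * Real.exp (-r)) r := by
  have h1 : HasDerivAt (fun x : ℝ => (x + 1) * Real.exp (-x))
      (1 * Real.exp (-r) + (r + 1) * (-Real.exp (-r))) r :=
    ((hasDerivAt_id r).add_const 1).mul (hasDerivAt_expneg r)
  have := h1.sub_const 1
  exact this.congr_deriv (by ring)

private lemma h'_neg : ∀ r < (0 : ℝ), (r + 1) * Real.exp (-r) - 1 < 0 := by
  intro r hr
  have mono : StrictMonoOn (fun x : ℝ => (x + 1) * Real.exp (-x) - 1) (Set.Iic 0) := by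
    apply strictMonoOn_of_deriv_pos (convex_Iic 0)
    · exact Continuous.continuousOn (by continuity)
    · intro x hx
      rw [interior_Iic] at hx
      rw [(hasDerivAt_h' x).deriv]
      have := Real.exp_pos (-x)
      have hx' : (0:ℝ) < -x := by simpa using hx
      exact mul_pos hx' this
  have := mono (Set.mem_Iic.mpr hr.le) (Set.mem_Iic.mpr le_rfl) hr
  simpa using this

private lemma h_pos : ∀ r < (0 : ℝ), 0 < 2 - r - (r + 2) * Real.exp (-r) := by
  intro r hr
  have hd : ∀ x : ℝ, HasDerivAt (fun x : ℝ => 2 - x - (x + 2) * Real.exp (-x))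
      ((x + 1) * Real.exp (-x) - 1) x := by
    intro x
    have h1 : HasDerivAt (fun y : ℝ => (y + 2) * Real.exp (-y))
        (1 * Real.exp (-x) + (x + 2) * (-Real.exp (-x))) x :=
      ((hasDerivAt_id x).add_const 2).mul (hasDerivAt_expneg x)
    have h2 := ((hasDerivAt_const x (2:ℝ)).sub (hasDerivAt_id x)).sub h1
    exact h2.congr_deriv (by ring)
  have anti : StrictAntiOn (fun x : ℝ => 2 - x - (x + 2) * Real.exp (-x)) (Set.Iic 0) := by
    apply strictAntiOn_of_deriv_neg (convex_Iic 0)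
    · exact Continuous.continuousOn (by continuity)
    · intro x hx
      rw [interior_Iic] at hx
      rw [(hd x).deriv]
      exact h'_neg x hx
  have := anti (Set.mem_Iic.mpr hr.le) (Set.mem_Iic.mpr le_rfl) hr
  simpa using this

theorem toda_potential_superquadratic_negative :
    ∀ r₁ r₂ : ℝ, r₁ < r₂ → r₂ < 0 → V₀ r₂ / r₂ ^ 2 < V₀ r₁ / r₁ ^ 2 := by
  have anti : StrictAntiOn (fun r : ℝ => V₀ r / r ^ 2) (Set.Iio 0) := by
    apply strictAntiOn_of_deriv_neg (convex_Iio 0)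
    · apply ContinuousOn.div
      · exact Continuous.continuousOn (by unfold V₀; continuity)
      · exact Continuous.continuousOn (by continuity)
      · intro x hx
        have hx0 : x ≠ 0 := ne_of_lt hx
        positivity
    · intro x hx
      rw [interior_Iio] at hx
      have hx0 : x ≠ 0 := ne_of_lt hx
      have hnum : HasDerivAt V₀ (-Real.exp (-x) + 1) x := by
        have := ((hasDerivAt_expneg x).add (hasDerivAt_id x)).sub_const 1
        exact this
      have hden : HasDerivAt (fun r : ℝ => r ^ 2) (2 * x) x := by
        simpa using hasDerivAt_pow 2 x
      have hder := hnum.div hden (by positivity)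
      rw [HasDerivAt.deriv (f := fun r => V₀ r / r ^ 2) hder]
      have hpos := h_pos x hx
      have hfactor : (-Real.exp (-x) + 1) * x ^ 2 - V₀ x * (2 * x)
          = x * (2 - x - (x + 2) * Real.exp (-x)) := by
        unfold V₀; ring
      rw [div_neg_iff]
      right
      constructor
      · rw [hfactor]
        exact mul_neg_of_neg_of_pos hx hpos
      · positivity
  intro r₁ r₂ h12 h2
  exact anti (Set.mem_Iio.mpr (h12.trans h2)) (Set.mem_Iio.mpr h2) h12
end

section
/- For 0 < |ζ| < 1 and γ > 0, the Toda soliton profile aₙ = (1/2)·√(1-ζ²+γζ^{2(n-1)})·√(1-ζ²+γζ^{2(n+1)})/(1-ζ²+γζ^{2n}) satisfies sup over n ∈ ℤ of (aₙ - 1/2) ≤ (1-|ζ|)²/(4|ζ|), i.e., the amplitude of the wave is bounded by (|λ|-1)/2 where λ = (ζ+ζ⁻¹)/2. -/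
/-- The amplitude of the Toda soliton profile is bounded by `(1-|ζ|)²/(4|ζ|) = (|λ|-1)/2`. -/
theorem toda_soliton_amplitude
    (ζ γ : ℝ) (hζ : ζ ∈ Set.Ioo (-1 : ℝ) 1) (hζ0 : ζ ≠ 0) (hγ : 0 < γ)
    (a : ℤ → ℝ)
    (ha : ∀ n : ℤ, a n = (1/2) *
      Real.sqrt (1 - ζ^2 + γ * ζ ^ (2*(n-1))) * Real.sqrt (1 - ζ^2 + γ * ζ ^ (2*(n+1)))
        / (1 - ζ^2 + γ * ζ ^ (2*n))) :
    (∀ n : ℤ, a n - 1/2 ≤ (1 - |ζ|)^2 / (4 * |ζ|)) ∧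
    (1 - |ζ|)^2 / (4 * |ζ|) = (|(ζ + ζ⁻¹)/2| - 1) / 2 := by
  obtain ⟨hζ1, hζ2⟩ := hζ
  have hs : 0 < |ζ| := abs_pos.mpr hζ0
  have hs1 : |ζ| < 1 := abs_lt.mpr ⟨hζ1, hζ2⟩
  have hst : |ζ|^2 = ζ^2 := sq_abs ζ
  have ht : 0 < ζ^2 := by positivity
  have ht1 : ζ^2 < 1 := by nlinarith
  constructor
  · intro n
    have hw : (0:ℝ) < ζ ^ (2*(n-1)) := by
      have h : ζ ^ (2*(n-1)) = (ζ^(n-1))^(2:ℕ) := by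
        rw [mul_comm, zpow_mul]
        norm_cast
      rw [h]
      have := zpow_ne_zero (n-1) hζ0
      positivity
    have h1 : ζ ^ (2*n) = ζ^(2*(n-1)) * ζ^2 := by
      rw [← zpow_natCast ζ 2, ← zpow_add₀ hζ0]
      ring_nf
    have h2 : ζ ^ (2*(n+1)) = ζ^(2*(n-1)) * ζ^2 * ζ^2 := by
      rw [← zpow_natCast ζ 2, ← zpow_add₀ hζ0, ← zpow_add₀ hζ0]
      ring_nf
    set s := |ζ| with hsdef
    set t := ζ^2 with htdef
    set v := γ * ζ^(2*(n-1)) with hvdef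
    have hv0 : 0 < v := mul_pos hγ hw
    have hc : 0 < 1 - t := by linarith
    have han : a n = (1/2) * Real.sqrt (1 - t + v) * Real.sqrt (1 - t + v*t*t)
        / (1 - t + v*t) := by
      rw [ha n, h1, h2, hvdef]; ring_nf
    have hC : 0 < 1 - t + v*t := by positivity
    have key : Real.sqrt (1 - t + v) * Real.sqrt (1 - t + v*t*t)
        ≤ (1+t)*(1 - t + v*t)/(2*s) := by
      rw [← Real.sqrt_mul (by positivity)]
      have h4 : (1 - t + v)*(1 - t + v*t*t) ≤ ((1+t)*(1 - t + v*t)/(2*s))^2 := by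
        rw [div_pow, le_div_iff₀ (by positivity)]
        nlinarith [sq_nonneg ((1-t)*((1-t) - v*t)), hst]
      calc Real.sqrt ((1 - t + v)*(1 - t + v*t*t))
          ≤ Real.sqrt (((1+t)*(1 - t + v*t)/(2*s))^2) := Real.sqrt_le_sqrt h4
        _ = (1+t)*(1 - t + v*t)/(2*s) := Real.sqrt_sq (by positivity)
    have habound : a n ≤ (1+t)/(4*s) := by
      rw [han]
      calc (1/2) * Real.sqrt (1 - t + v) * Real.sqrt (1 - t + v*t*t) / (1 - t + v*t)
          = (1/2) * (Real.sqrt (1 - t + v) * Real.sqrt (1 - t + v*t*t)) / (1 - t + v*t) := by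
            ring
        _ ≤ (1/2) * ((1+t)*(1 - t + v*t)/(2*s)) / (1 - t + v*t) := by gcongr
        _ = (1+t)/(4*s) := by field_simp; ring
    have heq : (1-s)^2/(4*s) = (1+t)/(4*s) - 1/2 := by
      rw [← hst]; field_simp; ring
    linarith
  · have habs : |(ζ + ζ⁻¹)/2| = (1 + ζ^2)/(2*|ζ|) := by
      have h : (ζ + ζ⁻¹)/2 = (ζ^2+1)/(2*ζ) := by field_simp
      rw [h, abs_div, abs_of_pos (by positivity : (0:ℝ) < ζ^2+1), abs_mul]
      norm_num
      ring
    rw [habs, ← hst]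
    field_simp
    linear_combination (0:ℝ) * hst
end
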